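/- arXiv:1411.5223 — 2 statements merged into one kernel-verified Lean document; each statement's English description precedes it below -/
import Mathlib

section
/- For all nonnegative integers m, n and nonzero complex q and complex z₁, z₂: h_{m,n}(z₁, z₂ | 1/q) = q^{-mn} i^{-m-n} H_{m,n}(i z₁, i z₂ | q), where i is the imaginary unit. -/
open Finset Filter

noncomputable def qPoch (a q : ℂ) (n : ℕ) : ℂ :=
  ∏ j ∈ Finset.range n, (1 - a * q ^ j)

noncomputable def qbinom (q : ℂ) : ℕ → ℕ → ℂ
  | _, 0 => 1
  | 0, _ + 1 => 0
  | m + 1, k + 1 => qbinom q m k + q ^ (k + 1) * qbinom q m (k + 1)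

/-- The first q-analogue of the 2D Hermite polynomials. -/
noncomputable def H2D (q z1 z2 : ℂ) (m n : ℕ) : ℂ :=
  ∑ k ∈ Finset.range (min m n + 1),
    qbinom q m k * qbinom q n k * (-1) ^ k * q ^ (k.choose 2) * qPoch q q k *
      z1 ^ (m - k) * z2 ^ (n - k)

/-- The second q-analogue of the 2D Hermite polynomials. -/
noncomputable def h2D (q z1 z2 : ℂ) (m n : ℕ) : ℂ :=
  ∑ j ∈ Finset.range (min m n + 1),
    qbinom q m j * qbinom q n j * q ^ ((m - j) * (n - j)) * (-1) ^ j * qPoch q q j *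
      z1 ^ (m - j) * z2 ^ (n - j)

/-- The q-2D ultraspherical (q-disk / q-Zernike) polynomials. -/
noncomputable def p2D (q b z1 z2 : ℂ) (m n : ℕ) : ℂ :=
  ∑ k ∈ Finset.range (min m n + 1),
    qbinom q m k * qbinom q n k * (-1) ^ k * q ^ (k.choose 2) * qPoch q q k *
      qPoch (b * q) q (m + n - k) * z1 ^ (m - k) * z2 ^ (n - k)

/-- The infinite q-Pochhammer product (a;q)_∞. -/
noncomputable def qPochInf (a q : ℂ) : ℂ :=
  ∏' j : ℕ, (1 - a * q ^ j)

lemma qbinom_zero_right (q : ℂ) (m : ℕ) : qbinom q m 0 = 1 := by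
  cases m <;> rfl

lemma qbinom_zero_of_lt (q : ℂ) : ∀ m k, m < k → qbinom q m k = 0 := by
  intro m
  induction m with
  | zero =>
    intro k hk
    cases k with
    | zero => omega
    | succ j => rfl
  | succ m ih =>
    intro k hk
    cases k with
    | zero => omega
    | succ j =>
      show qbinom q m j + q ^ (j + 1) * qbinom q m (j + 1) = 0
      rw [ih j (by omega), ih (j+1) (by omega)]; ring

lemma qbinom_one (q : ℂ) : ∀ m, qbinom q (m+1) 1 = q ^ m + qbinom q m 1 := by
  intro m
  induction m with
  | zero => show qbinom q 0 0 + q^1 * qbinom q 0 1 = q^0 + qbinom q 0 1; simp [qbinom]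
  | succ m ih =>
    have h3 : qbinom q (m+1) 1 = 1 + q^1 * qbinom q m 1 := by
      show qbinom q m 0 + q^1 * qbinom q m 1 = _
      rw [qbinom_zero_right]
    show qbinom q (m+1) 0 + q^1 * qbinom q (m+1) 1 = q ^ (m+1) + qbinom q (m+1) 1
    rw [qbinom_zero_right]
    linear_combination q * ih - h3

lemma qbinom_alt (q : ℂ) : ∀ m k, k ≤ m →
    qbinom q (m+1) (k+1) = q ^ (m - k) * qbinom q m k + qbinom q m (k+1) := by
  intro m
  induction m with
  | zero =>
    intro k hk
    interval_cases k
    show qbinom q 0 0 + q^1 * qbinom q 0 1 = q^0 * qbinom q 0 0 + qbinom q 0 1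
    simp [qbinom]
  | succ m ih =>
    intro k hk
    cases k with
    | zero =>
      rw [qbinom_one, qbinom_one, qbinom_zero_right, Nat.sub_zero]
      ring
    | succ j =>
      show qbinom q (m+1) (j+1) + q ^ (j + 2) * qbinom q (m+1) (j+2)
        = q ^ (m + 1 - (j+1)) * qbinom q (m+1) (j+1) + qbinom q (m+1) (j+2)
      rcases Nat.lt_or_ge j m with hlt | hge
      · obtain ⟨d, hd⟩ : ∃ d, m = j + d + 1 := ⟨m - j - 1, by omega⟩
        subst hd
        have e1 : j + d + 1 - j = d + 1 := by omega
        have e2 : j + d + 1 - (j + 1) = d := by omega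
        have e3 : j + d + 1 + 1 - (j + 1) = d + 1 := by omega
        have h1 := ih j (by omega)
        have h2 := ih (j+1) (by omega)
        rw [e1] at h1
        rw [e2] at h2
        rw [e3]
        have h3 : qbinom q (j+d+1+1) (j+1)
            = qbinom q (j+d+1) j + q^(j+1) * qbinom q (j+d+1) (j+1) := rfl
        have h4 : qbinom q (j+d+1+1) (j+2)
            = qbinom q (j+d+1) (j+1) + q^(j+2) * qbinom q (j+d+1) (j+2) := rfl
        linear_combination h1 + q^(j+2) * h2 - q^(d+1) * h3 - h4
      · have hjm' : j = m := by omega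
        subst hjm'
        rw [qbinom_zero_of_lt q (j+1) (j+2) (by omega)]
        rw [Nat.sub_self]
        ring

lemma qbinom_inv (q : ℂ) (hq : q ≠ 0) : ∀ m k,
    qbinom q⁻¹ m k * q ^ (m * k) = q ^ (k * k) * qbinom q m k := by
  intro m
  induction m with
  | zero =>
    intro k
    cases k with
    | zero => simp [qbinom_zero_right]
    | succ j =>
      show qbinom q⁻¹ 0 (j+1) * _ = _ * qbinom q 0 (j+1)
      rw [show qbinom q⁻¹ 0 (j+1) = 0 from rfl, show qbinom q 0 (j+1) = 0 from rfl]
      ring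
  | succ m ih =>
    intro k
    cases k with
    | zero => simp [qbinom_zero_right]
    | succ j =>
      by_cases hjm : j ≤ m
      · obtain ⟨d, hd⟩ : ∃ d, m = j + d := ⟨m - j, by omega⟩
        subst hd
        have h1 := ih j
        have h2 := ih (j+1)
        have h3 := qbinom_alt q (j+d) j (by omega)
        rw [show j + d - j = d from by omega] at h3
        have hp : (q⁻¹)^(j+1) * q^(j+1) = 1 := by
          rw [inv_pow, inv_mul_cancel₀ (pow_ne_zero _ hq)]
        show (qbinom q⁻¹ (j+d) j + (q⁻¹) ^ (j+1) * qbinom q⁻¹ (j+d) (j+1)) * q ^ ((j+d+1)*(j+1))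
          = q ^ ((j+1)*(j+1)) * qbinom q (j+d+1) (j+1)
        rw [h3]
        linear_combination (q^(2*j+d+1)) * h1 + ((q⁻¹)^(j+1) * q^(j+1)) * h2
          + (q^((j+1)*(j+1)) * qbinom q (j+d) (j+1)) * hp
      · rw [qbinom_zero_of_lt q⁻¹ (m+1) (j+1) (by omega),
            qbinom_zero_of_lt q (m+1) (j+1) (by omega)]
        ring

lemma qPoch_inv (q : ℂ) (hq : q ≠ 0) : ∀ k,
    qPoch q⁻¹ q⁻¹ k * q ^ ((k+1).choose 2) = (-1)^k * qPoch q q k := by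
  intro k
  induction k with
  | zero => simp [qPoch]
  | succ k ih =>
    have hp : (q⁻¹)^(k+1) * q^(k+1) = 1 := by
      rw [inv_pow, inv_mul_cancel₀ (pow_ne_zero _ hq)]
    have e : (k+2).choose 2 = (k+1).choose 2 + (k+1) := by

      simp [Nat.choose_succ_succ, Nat.choose_one_right]
      omega
    have hs : ∀ a b : ℂ, qPoch a b (k+1) = qPoch a b k * (1 - a * b^k) := by
      intro a b; rw [qPoch, Finset.prod_range_succ]; rfl
    rw [hs, hs, e, pow_add]
    linear_combination (q^(k+1) - (q⁻¹)^(k+1)*q^(k+1)) * ih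
      - (-1)^k * qPoch q q k * hp

lemma sq_choose : ∀ k : ℕ, k * k = k + 2 * k.choose 2 := by
  intro k
  induction k with
  | zero => rfl
  | succ j ihj =>
    have h : (j+1).choose 2 = j.choose 2 + j := by
      simp [Nat.choose_succ_succ, Nat.choose_one_right]
      omega
    rw [h]
    nlinarith [ihj]

theorem stmt8 (m n : ℕ) (q : ℂ) (hq : q ≠ 0) (z1 z2 : ℂ) :
    h2D (1 / q) z1 z2 m n =
      (q ^ (m * n))⁻¹ * (Complex.I ^ (m + n))⁻¹ *
        H2D q (Complex.I * z1) (Complex.I * z2) m n := by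
  rw [one_div, h2D, H2D, Finset.mul_sum]
  refine Finset.sum_congr rfl ?_
  intro k hk
  simp only [Finset.mem_range] at hk
  have hkm : k ≤ m := by omega
  have hkn : k ≤ n := by omega
  obtain ⟨a, ha⟩ : ∃ a, m = k + a := ⟨m - k, by omega⟩
  obtain ⟨b, hb⟩ : ∃ b, n = k + b := ⟨n - k, by omega⟩
  subst ha hb
  rw [show k + a - k = a from by omega, show k + b - k = b from by omega]
  have hB : ∀ M : ℕ, qbinom q⁻¹ M k = q ^ (k*k) * qbinom q M k / q ^ (M*k) := by
    intro M
    rw [eq_div_iff (pow_ne_zero _ hq)]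
    linear_combination qbinom_inv q hq M k
  have hP : qPoch q⁻¹ q⁻¹ k = (-1)^k * qPoch q q k / q ^ ((k+1).choose 2) := by
    rw [eq_div_iff (pow_ne_zero _ hq)]
    linear_combination qPoch_inv q hq k
  have hC : (k+1).choose 2 = k.choose 2 + k := by
    simp [Nat.choose_succ_succ, Nat.choose_one_right]
    omega
  have hI : (Complex.I ^ (k + a + (k + b)))⁻¹
      = (-1:ℂ)^k * (Complex.I^a)⁻¹ * (Complex.I^b)⁻¹ := by
    rw [show k + a + (k + b) = 2*k + (a + b) from by ring, pow_add, pow_mul,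
      Complex.I_sq, pow_add, mul_inv, mul_inv, ← inv_pow, inv_neg, inv_one]
    ring
  have hsq : k * k = k + 2 * k.choose 2 := sq_choose k
  have hq2 : q ^ (k*a + k*b + 3*(k*k) + a*b)
      * q⁻¹ ^ (k + k*a + k*b + 2*(k*k) + a*b + k.choose 2) = q ^ (k.choose 2) := by
    rw [show k*a + k*b + 3*(k*k) + a*b
        = (k + k*a + k*b + 2*(k*k) + a*b + k.choose 2) + k.choose 2 from by linarith [hsq],
      pow_add, inv_pow]
    field_simp
  rw [hB, hB, hP, hC, hI, inv_pow, mul_pow, mul_pow]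
  rw [pow_add]
  field_simp
  have hq3 : q ^ (k*k) = q ^ k * q ^ (k.choose 2 * 2) := by
    rw [← pow_add]
    congr 1
    linarith [hsq]
  linear_combination (q^(k*a) * q^(k*b) * q^(k*k*2) * q^(a*b) * qbinom q (k+a) k
    * qbinom q (k+b) k * qPoch q q k * z1^a * z2^b) * hq3
end

section
/- For all nonnegative integers m, n and complex z₁, z₂, q: q^n z₁ h_{m,n}(z₁, z₂ | q) = h_{m+1,n}(z₁, z₂ | q) + (1 - q^n) h_{m,n-1}(z₁, z₂ | q), where the term with n-1 is interpreted as 0 if n = 0. -/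
open Finset Filter

lemma qbinom_zero (q : ℂ) (n : ℕ) : qbinom q n 0 = 1 := by cases n <;> rfl

lemma qbinom_succ (q : ℂ) (n k : ℕ) :
    qbinom q (n+1) (k+1) = qbinom q n k + q ^ (k + 1) * qbinom q n (k + 1) := rfl

lemma qbinom_eq_zero (q : ℂ) : ∀ (n k : ℕ), n < k → qbinom q n k = 0 := by
  intro n
  induction n with
  | zero => intro k hk; match k, hk with | k+1, _ => rfl
  | succ n ih =>
    intro k hk
    match k, hk with
    | k+1, hk => rw [qbinom_succ, ih k (by omega), ih (k+1) (by omega)]; ring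

lemma qbinom_one_s10 (q : ℂ) (n : ℕ) : (1 - q) * qbinom q n 1 = 1 - q ^ n := by
  induction n with
  | zero => simp [qbinom]
  | succ n ih =>
    rw [qbinom_succ, qbinom_zero]
    have : (1 - q) * (q ^ 1 * qbinom q n 1) = q * ((1-q) * qbinom q n 1) := by ring
    rw [mul_add, this, ih]; ring

-- L0 : (1 - q^(n-k)) [n,k] = (1 - q^(k+1)) [n,k+1]
lemma qbinom_L0 (q : ℂ) : ∀ (n k : ℕ),
    (1 - q ^ (n - k)) * qbinom q n k = (1 - q ^ (k + 1)) * qbinom q n (k + 1) := by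
  intro n
  induction n with
  | zero =>
    intro k
    cases k with
    | zero => simp [qbinom]
    | succ k => rw [qbinom_eq_zero q 0 (k+1) (by omega), qbinom_eq_zero q 0 (k+1+1) (by omega)]; ring
  | succ n ih =>
    intro k
    cases k with
    | zero =>
      rw [qbinom_zero, Nat.sub_zero, mul_one, pow_one]
      exact (qbinom_one_s10 q (n+1)).symm
    | succ i =>
      rcases le_or_gt (i+1) n with h | h
      · have e1 : (n + 1) - (i + 1) = (n - i) := by omega
        have e2 : i + 1 + (n - i) = n + 1 := by omega
        have e3 : i + 1 + 1 + (n - (i+1)) = n + 1 := by omega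
        rw [qbinom_succ q n i, qbinom_succ q n (i+1), e1]
        have hi := ih i
        have hi1 := ih (i+1)
        calc (1 - q ^ (n - i)) * (qbinom q n i + q ^ (i + 1) * qbinom q n (i + 1))
            = (1 - q ^ (n-i)) * qbinom q n i
              + q ^ (i+1) * ((1 - q ^ (n - i)) * qbinom q n (i + 1)) := by ring
          _ = (1 - q ^ (i+1)) * qbinom q n (i+1)
              + q ^ (i+1) * ((1 - q ^ (n - i)) * qbinom q n (i + 1)) := by rw [hi]
          _ = (1 - q ^ (n+1)) * qbinom q n (i+1) := by
              rw [← e2]; ring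
          _ = (1 - q ^ (i + 1 + 1)) * (qbinom q n (i + 1) + q ^ (i + 1 + 1) * qbinom q n (i + 1 + 1)) := by
              have h4 : (1 - q ^ (i+1+1)) * (q ^ (i+1+1) * qbinom q n (i+1+1))
                  = q ^ (i+1+1) * ((1 - q ^ (n - (i+1))) * qbinom q n (i+1)) := by
                linear_combination (-(q ^ (i+1+1))) * hi1
              rw [mul_add, h4, ← e3]; ring
      · rcases eq_or_lt_of_le (by omega : n ≤ i) with rfl | h2
        · rw [qbinom_eq_zero q (n+1) (n+1+1) (by omega),
            show n + 1 - (n + 1) = 0 from by omega]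
          ring
        · rw [qbinom_eq_zero q (n+1) (i+1+1) (by omega),
            qbinom_eq_zero q (n+1) (i+1) (by omega)]; ring

-- L : (1 - q^(k+1)) [n+1,k+1] = (1 - q^(n+1)) [n,k]
lemma qbinom_L (q : ℂ) (n k : ℕ) :
    (1 - q ^ (k + 1)) * qbinom q (n+1) (k+1) = (1 - q ^ (n + 1)) * qbinom q n k := by
  rcases le_or_gt k n with h | h
  · have e : k + 1 + (n - k) = n + 1 := by omega
    rw [qbinom_succ, mul_add]
    have h4 : (1 - q ^ (k+1)) * (q ^ (k+1) * qbinom q n (k+1))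
        = q ^ (k+1) * ((1 - q ^ (n - k)) * qbinom q n k) := by
      linear_combination (-(q ^ (k+1))) * qbinom_L0 q n k
    rw [h4, ← e]; ring
  · rw [qbinom_eq_zero q (n+1) (k+1) (by omega), qbinom_eq_zero q n k (by omega)]; ring

lemma qPoch_succ (q : ℂ) (k : ℕ) : qPoch q q (k+1) = qPoch q q k * (1 - q ^ (k+1)) := by
  rw [qPoch, qPoch, Finset.prod_range_succ, ← pow_succ']

lemma h2D_ext (q z1 z2 : ℂ) (m n N : ℕ) (h : min m n + 1 ≤ N) :
    h2D q z1 z2 m n = ∑ j ∈ Finset.range N,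
      qbinom q m j * qbinom q n j * q ^ ((m - j) * (n - j)) * (-1) ^ j * qPoch q q j *
        z1 ^ (m - j) * z2 ^ (n - j) := by
  rw [h2D]
  apply Finset.sum_subset (Finset.range_subset_range.2 h)
  intro j _ hj
  rw [Finset.mem_range, not_lt] at hj
  rcases le_or_gt j m with h1 | h1
  · rw [qbinom_eq_zero q n j (by omega)]; ring
  · rw [qbinom_eq_zero q m j (by omega)]; ring

lemma assemble (M : ℕ) (fL f1 f2 : ℕ → ℂ) (h0 : fL 0 = f1 0)
    (key : ∀ i ∈ Finset.range M, fL (i+1) = f1 (i+1) + f2 i) :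
    ∑ j ∈ Finset.range (M+1), fL j
      = ∑ j ∈ Finset.range (M+1), f1 j + ∑ i ∈ Finset.range M, f2 i := by
  rw [Finset.sum_range_succ' fL, Finset.sum_range_succ' f1,
    Finset.sum_congr rfl key, Finset.sum_add_distrib, h0]
  ring


theorem stmt10 (m n : ℕ) (z1 z2 q : ℂ) :
    q ^ n * z1 * h2D q z1 z2 m n =
      h2D q z1 z2 (m + 1) n + (1 - q ^ n) * h2D q z1 z2 m (n - 1) := by
  cases n with
  | zero =>
    simp only [pow_zero, one_mul, sub_self, zero_mul, add_zero, h2D, Nat.min_zero,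
      zero_add, Finset.sum_range_one, qbinom_zero, Nat.sub_zero, Nat.mul_zero]
    simp [qPoch, pow_succ]
    ring
  | succ N =>
    rw [show N + 1 - 1 = N from rfl,
      h2D_ext q z1 z2 m (N+1) (m+1+1) (by omega),
      h2D_ext q z1 z2 (m+1) (N+1) (m+1+1) (by omega),
      h2D_ext q z1 z2 m N (m+1) (by omega),
      Finset.mul_sum]
    refine assemble (m+1) _
      (fun j => qbinom q (m+1) j * qbinom q (N+1) j * q ^ ((m + 1 - j) * (N + 1 - j)) *
        (-1) ^ j * qPoch q q j * z1 ^ (m + 1 - j) * z2 ^ (N + 1 - j))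
      (fun i => (1 - q ^ (N+1)) * (qbinom q m i * qbinom q N i * q ^ ((m - i) * (N - i)) *
        (-1) ^ i * qPoch q q i * z1 ^ (m - i) * z2 ^ (N - i))) ?_ ?_ |>.trans ?_
    · -- h0
      simp only [Nat.sub_zero, qbinom_zero, pow_zero, qPoch]
      simp only [Finset.range_zero, Finset.prod_empty]
      rw [show (m+1) * (N+1) = m * (N+1) + (N+1) from by ring, pow_add, pow_succ]
      ring
    · -- key
      intro i hi
      rw [Finset.mem_range] at hi
      have hL := qbinom_L q N i
      simp only [Nat.succ_sub_succ]
      rw [qbinom_succ q m i, qPoch_succ q i]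
      rcases le_or_gt (i+1) m with h1 | h1
      · rcases le_or_gt i N with h2 | h2
        · rw [show q ^ (N+1) = q ^ (i+1) * q ^ (N-i) from by
              rw [← pow_add]; congr 1; omega] at hL
          rw [show q ^ (N+1) = q ^ (i+1) * q ^ (N-i) from by
              rw [← pow_add]; congr 1; omega,
            show (m - i) * (N - i) = (m - (i+1)) * (N - i) + (N - i) from by
              have : m - i = (m - (i+1)) + 1 := by omega
              rw [this]; ring,
            show z1 ^ (m - i) = z1 * z1 ^ (m - (i+1)) from by
              rw [show m - i = (m - (i+1)) + 1 from by omega, pow_succ]; ring,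
            pow_add]
          linear_combination ((-1:ℂ)^i * qbinom q m i * q ^ ((m-(i+1))*(N-i)) * q ^ (N-i) *
            qPoch q q i * z1 * z1 ^ (m-(i+1)) * z2 ^ (N-i)) * hL
        · rw [qbinom_eq_zero q (N+1) (i+1) (by omega), qbinom_eq_zero q N i (by omega)]
          ring
      · rw [qbinom_eq_zero q m (i+1) (by omega)]
        linear_combination ((-1:ℂ)^i * qbinom q m i * q ^ ((m-i)*(N-i)) *
          qPoch q q i * z1 ^ (m-i) * z2 ^ (N-i)) * hL
    · -- final: rewrite ∑ (1-q^(N+1)) * f back to (1-q^(N+1)) * ∑ f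
      rw [← Finset.mul_sum]
end
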